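/- Let ρ be the largest root of x^3 - a x^2 - (a+3)x - 1 with a ∈ Z, a ≥ -1. Then N(-v - wρ + (v+1)ρ^2) = a^2vW - av^2W - avW^2 + a^2v - 2av^2 + avW + aW^2 + v^3 - 3vW^2 - W^3 + 3av + 3aW - 3v^2 - 3vW - 3W^2 + 2a + 3, where W = w - v(a+2) - 1 and N denotes the field norm from Q(ρ) to Q. -/
import Mathlib


theorem simplest_cubic_norm_triangle (a : ℤ) (ha : -1 ≤ a) (ρ ρ' ρ'' : ℝ)
    (hρ : ρ^3 - a*ρ^2 - (a+3)*ρ - 1 = 0)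
    (hρ' : ρ'^3 - a*ρ'^2 - (a+3)*ρ' - 1 = 0)
    (hρ'' : ρ''^3 - a*ρ''^2 - (a+3)*ρ'' - 1 = 0)
    (hlt1 : ρ' < ρ) (hlt2 : ρ'' < ρ) (hne : ρ' ≠ ρ'')
    (v w W : ℤ) (hW : W = w - v*(a+2) - 1) :
    (-(v:ℝ) - w*ρ + (v+1)*ρ^2) * (-(v:ℝ) - w*ρ' + (v+1)*ρ'^2) *
      (-(v:ℝ) - w*ρ'' + (v+1)*ρ''^2)
    = ((a^2*v*W - a*v^2*W - a*v*W^2 + a^2*v - 2*a*v^2 + a*v*W + a*W^2 + v^3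
        - 3*v*W^2 - W^3 + 3*a*v + 3*a*W - 3*v^2 - 3*v*W - 3*W^2 + 2*a + 3 : ℤ) : ℝ) := by
  subst hW
  have hne1 : ρ - ρ' ≠ 0 := sub_ne_zero.mpr hlt1.ne'
  have hne2 : ρ - ρ'' ≠ 0 := sub_ne_zero.mpr hlt2.ne'
  have hne3 : ρ' - ρ'' ≠ 0 := sub_ne_zero.mpr hne
  have h1 : ρ^2 + ρ*ρ' + ρ'^2 - a*(ρ+ρ') - (a+3) = 0 := by
    have := mul_eq_zero.mp (show (ρ - ρ') * (ρ^2 + ρ*ρ' + ρ'^2 - a*(ρ+ρ') - (a+3)) = 0 by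
      linear_combination hρ - hρ')
    tauto
  have h2 : ρ^2 + ρ*ρ'' + ρ''^2 - a*(ρ+ρ'') - (a+3) = 0 := by
    have := mul_eq_zero.mp (show (ρ - ρ'') * (ρ^2 + ρ*ρ'' + ρ''^2 - a*(ρ+ρ'') - (a+3)) = 0 by
      linear_combination hρ - hρ'')
    tauto
  have hp : ρ + ρ' + ρ'' = a := by
    have := mul_eq_zero.mp (show (ρ' - ρ'') * (ρ + ρ' + ρ'' - a) = 0 by
      linear_combination h1 - h2)
    rcases this with h | h
    · exact absurd h hne3
    · linarith [sub_eq_zero.mp h]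
  have hq : ρ*ρ' + ρ*ρ'' + ρ'*ρ'' = -(a+3) := by
    linear_combination (ρ + ρ') * hp - h1
  have hr : ρ * ρ' * ρ'' = 1 := by
    linear_combination hρ - ρ^2 * hp + ρ * hq
  push_cast
  set c : ℝ := (v:ℝ) + 1 with hc
  set b : ℝ := -(w:ℝ) with hb
  set d : ℝ := -(v:ℝ) with hd
  set e1 : ℝ := ρ + ρ' + ρ'' with he1
  set e2 : ℝ := ρ*ρ' + ρ*ρ'' + ρ'*ρ'' with he2
  set e3 : ℝ := ρ * ρ' * ρ'' with he3
  linear_combination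
    (-2*c^2*d*e3 + c*b^2*e3 + c*b*d*e2 + c*d^2*(e1+(a:ℝ)) + b*d^2) * hp
    + (c^2*b*e3 + c^2*d*(e2-((a:ℝ)+3)) + c*b*d*(a:ℝ) - 2*c*d^2 + b^2*d) * hq
    + (c^3*(e3+1) - c^2*b*((a:ℝ)+3) - 2*c^2*d*(a:ℝ) + c*b^2*(a:ℝ) - 3*c*b*d + b^3) * hr
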